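/- The number of connected components of the poset (≤_S, S_{2n}) of Schröder paths of length 2n is 2^n. -/

import Mathlib

/-- Steps: north `N = (0,1)`, east `E = (1,0)`, diagonal `D = (1,1)`. -/
inductive MStep : Type
  | N | E | D
  deriving DecidableEq

/-- The contribution of a step to the height `y - x` above the diagonal. -/
def MStep.hdiff : MStep → ℤ
  | .N => 1
  | .E => -1
  | .D => 0

/-- The total height change `y - x` along a word of steps. -/
def wsum (p : List MStep) : ℤ := (p.map MStep.hdiff).sum

/-- A (nonempty) Motzkin path: starts at the origin, never goes below the
diagonal `y = x`, and ends on the diagonal. -/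
def IsMotzkin (p : List MStep) : Prop :=
  p ≠ [] ∧ (∀ q, q <+: p → 0 ≤ wsum q) ∧ wsum p = 0

/-- A Dyck path is a Motzkin path with no diagonal step. -/
def IsDyck (p : List MStep) : Prop := IsMotzkin p ∧ MStep.D ∉ p

/-- A path is primitive if it touches the diagonal only at its endpoints. -/
def IsPrimitive (p : List MStep) : Prop :=
  IsMotzkin p ∧ ∀ q, q <+: p → q ≠ [] → q ≠ p → 0 < wsum q

/-- Covering relation for the Tamari-type order on Motzkin paths:
`Q` covers `P` iff `P = P₁·E·P₂·P₃` and `Q = P₁·P₂·E·P₃` with `P₂` a nonempty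
primitive Motzkin path. -/
def MCover (P Q : List MStep) : Prop :=
  ∃ P₁ P₂ P₃ : List MStep, IsMotzkin P₂ ∧ IsPrimitive P₂ ∧
    P = P₁ ++ [MStep.E] ++ P₂ ++ P₃ ∧ Q = P₁ ++ P₂ ++ [MStep.E] ++ P₃

/-- Covering relation of the Tamari order on Dyck paths. -/
def DCover (P Q : List MStep) : Prop :=
  ∃ P₁ P₂ P₃ : List MStep, IsDyck P₂ ∧ IsPrimitive P₂ ∧
    P = P₁ ++ [MStep.E] ++ P₂ ++ P₃ ∧ Q = P₁ ++ P₂ ++ [MStep.E] ++ P₃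

/-- The partial order `≤_M` on Motzkin paths. -/
def MLE : List MStep → List MStep → Prop := Relation.ReflTransGen MCover

/-- The Tamari order `≤_D` on Dyck paths. -/
def DLE : List MStep → List MStep → Prop := Relation.ReflTransGen DCover

/-- Heights of the diagonal steps along a path, starting from height `h`. -/
def clsFrom : List MStep → ℤ → List ℤ
  | [], _ => []
  | .N :: rest, h => clsFrom rest (h + 1)
  | .E :: rest, h => clsFrom rest h
  | .D :: rest, h => (h + 1) :: clsFrom rest (h + 1)

/-- The class of a Motzkin path: the sequence of heights (ending `y`-coordinates)
of its diagonal steps, in the order they occur. -/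
def cls (p : List MStep) : List ℤ := clsFrom p 0

/-- A path avoids `NNN` if it has no three consecutive north steps. -/
def AvoidsNNN (p : List MStep) : Prop := ¬ ([MStep.N, MStep.N, MStep.N] <:+: p)

/-- Callan's bijection `φ`: replace each factor `NE` by `D` and each factor
`NNE` by `N`, leaving remaining east steps unchanged. -/
def phi : List MStep → List MStep
  | [] => []
  | .N :: .N :: .E :: rest => .N :: phi rest
  | .N :: .E :: rest => .D :: phi rest
  | s :: rest => s :: phi rest

/-- The inverse of `φ`: replace each `D` by `NE` and each `N` by `NNE`. -/
def psi : List MStep → List MStep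
  | [] => []
  | .N :: rest => .N :: .N :: .E :: psi rest
  | .D :: rest => .N :: .E :: psi rest
  | .E :: rest => .E :: psi rest

/-- For each north step of the path (in order), record `N` if it is immediately
followed by an east step and `E` otherwise. -/
def typeRaw : List MStep → List MStep
  | [] => []
  | .N :: rest => (if rest.head? = some MStep.E then MStep.N else MStep.E) :: typeRaw rest
  | _ :: rest => typeRaw rest

/-- The type of a Dyck path of length `2n`: the word of length `n - 1` whose
`i`-th letter is `N` iff the `i`-th north step is immediately followed by an
east step (the letter of the last north step is dropped). -/
def typeW (p : List MStep) : List MStep := (typeRaw p).dropLast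

/-- `ds p` is the number of north steps of `p` that are neither immediately
preceded nor immediately followed by another north step. -/
def ds (p : List MStep) : ℕ :=
  ((Finset.range p.length).filter (fun i =>
    p[i]? = some MStep.N ∧ p[i + 1]? ≠ some MStep.N ∧
      (i = 0 ∨ p[i - 1]? ≠ some MStep.N))).card

/-- The number of contacts of a path with the diagonal `y = x` (lattice points
of the path lying on the diagonal, endpoints included). -/
def cont (p : List MStep) : ℕ :=
  ((Finset.range (p.length + 1)).filter (fun i => wsum (p.take i) = 0)).card

namespace SchroederAux

open List

lemma wsum_nil : wsum [] = 0 := rfl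

lemma wsum_cons (s : MStep) (p : List MStep) : wsum (s :: p) = s.hdiff + wsum p := by
  simp [wsum]

lemma wsum_append (a b : List MStep) : wsum (a ++ b) = wsum a + wsum b := by
  simp [wsum]

/-- Boolean predicate: not an east step. -/
def notE : MStep → Bool
  | .E => false
  | _ => true

lemma notE_iff (s : MStep) : notE s = true ↔ s ≠ MStep.E := by
  cases s <;> simp [notE]

lemma length_counts (p : List MStep) :
    p.length = p.count MStep.N + p.count MStep.E + p.count MStep.D := by
  induction p with
  | nil => simp
  | cons s r ih => cases s <;> simp [List.count_cons, ih] <;> omega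

lemma wsum_counts (p : List MStep) :
    wsum p = (p.count MStep.N : ℤ) - p.count MStep.E := by
  induction p with
  | nil => simp [wsum]
  | cons s r ih =>
    cases s <;> simp [wsum_cons, List.count_cons, ih, MStep.hdiff] <;> push_cast <;> ring

lemma countP_notE (p : List MStep) :
    p.countP notE = p.count MStep.N + p.count MStep.D := by
  induction p with
  | nil => simp
  | cons s r ih => cases s <;> simp [List.countP_cons, List.count_cons, ih, notE] <;> omega

lemma neg_length_le_wsum (p : List MStep) : -(p.length : ℤ) ≤ wsum p := by
  induction p with
  | nil => simp [wsum]
  | cons s r ih =>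
    rw [wsum_cons]
    have : (-1 : ℤ) ≤ s.hdiff := by cases s <;> simp [MStep.hdiff]
    simp only [List.length_cons]
    push_cast
    omega

lemma wsum_nonneg_of_not_mem_E (p : List MStep) (h : MStep.E ∉ p) : 0 ≤ wsum p := by
  rw [wsum_counts]
  simp [List.count_eq_zero_of_not_mem h]

/-- Total `y`-increase of a word. -/
def yca (p : List MStep) : ℤ := (p.map (fun s => if s = MStep.E then (0 : ℤ) else 1)).sum

lemma yca_append (a b : List MStep) : yca (a ++ b) = yca a + yca b := by simp [yca]

lemma yca_counts (p : List MStep) : yca p = (p.count MStep.N : ℤ) + p.count MStep.D := by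
  induction p with
  | nil => simp [yca]
  | cons s r ih =>
    cases s <;> simp [yca, List.count_cons] <;> rw [show (r.map (fun s => if s = MStep.E then (0:ℤ) else 1)).sum = yca r from rfl, ih] <;> push_cast <;> ring

lemma yca_cons (s : MStep) (r : List MStep) :
    yca (s :: r) = (if s = MStep.E then (0 : ℤ) else 1) + yca r := by simp [yca]

lemma clsFrom_append (a b : List MStep) (h : ℤ) :
    clsFrom (a ++ b) h = clsFrom a h ++ clsFrom b (h + yca a) := by
  induction a generalizing h with
  | nil => simp [clsFrom, yca]
  | cons s r ih =>
    simp only [List.cons_append]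
    cases s
    · show clsFrom (r ++ b) (h + 1) = clsFrom r (h + 1) ++ clsFrom b (h + yca (MStep.N :: r))
      rw [ih, yca_cons, if_neg (by decide)]
      congr 2
      ring
    · show clsFrom (r ++ b) h = clsFrom r h ++ clsFrom b (h + yca (MStep.E :: r))
      rw [ih, yca_cons, if_pos rfl]
      congr 2
      ring
    · show (h + 1) :: clsFrom (r ++ b) (h + 1)
          = ((h + 1) :: clsFrom r (h + 1)) ++ clsFrom b (h + yca (MStep.D :: r))
      rw [ih, yca_cons, if_neg (by decide)]
      simp only [List.cons_append, List.cons.injEq, true_and]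
      congr 2
      ring

lemma clsFrom_mem (p : List MStep) (h : ℤ) (x : ℤ) (hx : x ∈ clsFrom p h) :
    h < x ∧ x ≤ h + p.count MStep.N + p.count MStep.D := by
  induction p generalizing h with
  | nil => simp [clsFrom] at hx
  | cons s r ih =>
    cases s
    · have := ih (h + 1) hx
      simp [List.count_cons]
      push_cast
      omega
    · have := ih h hx
      simp [List.count_cons]
      omega
    · simp [clsFrom] at hx
      simp [List.count_cons]
      rcases hx with hx | hx
      · push_cast; omega
      · have := ih (h + 1) hx
        push_cast
        omega

lemma clsFrom_sorted (p : List MStep) (h : ℤ) : (clsFrom p h).Pairwise (· < ·) := by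
  induction p generalizing h with
  | nil => simp [clsFrom]
  | cons s r ih =>
    cases s
    · exact ih (h + 1)
    · exact ih h
    · simp only [clsFrom, List.pairwise_cons]
      exact ⟨fun x hx => (clsFrom_mem r (h + 1) x hx).1, ih (h + 1)⟩

lemma clsFrom_length (p : List MStep) (h : ℤ) :
    (clsFrom p h).length = p.count MStep.D := by
  induction p generalizing h with
  | nil => simp [clsFrom]
  | cons s r ih => cases s <;> simp [clsFrom, ih, List.count_cons]

lemma clsFrom_filter (p : List MStep) (h : ℤ) :
    clsFrom (p.filter notE) h = clsFrom p h := by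
  induction p generalizing h with
  | nil => simp
  | cons s r ih => cases s <;> simp [clsFrom, notE, ih, List.filter_cons]

/-- The "inversion number": number of pairs (E-step, later non-E step). -/
def mu : List MStep → ℕ
  | [] => 0
  | .E :: r => r.countP notE + mu r
  | .N :: r => mu r
  | .D :: r => mu r

lemma mu_append (a b : List MStep) :
    mu (a ++ b) = mu a + mu b + a.count MStep.E * b.countP notE := by
  induction a with
  | nil => simp [mu]
  | cons s r ih =>
    cases s <;> simp [mu, ih, List.count_cons, List.countP_append] <;> ring

lemma prefix_append_cases {q a b : List MStep} (h : q <+: a ++ b) :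
    q <+: a ∨ ∃ r, q = a ++ r ∧ r <+: b := by
  rcases le_or_gt q.length a.length with hle | hlt
  · exact Or.inl (List.prefix_of_prefix_length_le h (List.prefix_append a b) hle)
  · right
    have ha : a <+: q := List.prefix_of_prefix_length_le (List.prefix_append a b) h hlt.le
    obtain ⟨r, rfl⟩ := ha
    refine ⟨r, rfl, ?_⟩
    obtain ⟨t, ht⟩ := h
    rw [List.append_assoc] at ht
    exact ⟨t, (List.append_cancel_left ht)⟩

lemma wsum_E : wsum [MStep.E] = -1 := by simp [wsum, MStep.hdiff]

lemma hdiff_ge (s : MStep) : -1 ≤ s.hdiff := by cases s <;> simp [MStep.hdiff]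

lemma hdiff_notE {s : MStep} (h : notE s = true) : 0 ≤ s.hdiff := by
  cases s <;> simp [MStep.hdiff] <;> simp [notE] at h

lemma yca_E : yca [MStep.E] = 0 := by simp [yca]

lemma cls_cover {P Q : List MStep} (h : MCover P Q) : cls P = cls Q := by
  obtain ⟨a, b, c, _, _, rfl, rfl⟩ := h
  simp [cls, clsFrom_append, yca_append, yca_E,
    show ∀ (x : List MStep) (h : ℤ), clsFrom (MStep.E :: x) h = clsFrom x h from fun _ _ => rfl,
    add_assoc, add_comm, add_left_comm]

lemma cover_stats {P Q : List MStep} (h : MCover P Q) :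
    P.filter notE = Q.filter notE ∧ P.count MStep.E = Q.count MStep.E ∧
      P.count MStep.D = Q.count MStep.D ∧ P.length = Q.length := by
  obtain ⟨a, b, c, _, _, rfl, rfl⟩ := h
  refine ⟨?_, ?_, ?_, ?_⟩ <;>
    simp [List.filter_append, List.count_append, List.length_append, notE] <;> omega

lemma cover_motzkin {P Q : List MStep} (hP : IsMotzkin P) (h : MCover P Q) :
    IsMotzkin Q := by
  obtain ⟨a, b, c, hb, _, rfl, rfl⟩ := h
  obtain ⟨hbne, hbpre, hbsum⟩ := hb
  obtain ⟨hPne, hPpre, hPsum⟩ := hP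
  have ha1 : 1 ≤ wsum a := by
    have h0 := hPpre (a ++ [MStep.E]) ⟨b ++ c, by simp⟩
    rw [wsum_append, wsum_E] at h0
    linarith
  have hPsum' : wsum a + -1 + wsum b + wsum c = 0 := by
    have h0 : wsum (((a ++ [MStep.E]) ++ b) ++ c) = 0 := hPsum
    rw [wsum_append, wsum_append, wsum_append, wsum_E] at h0
    linarith
  refine ⟨by simp, ?_, ?_⟩
  · intro q hq
    have hq' : q <+: a ++ (b ++ ([MStep.E] ++ c)) := by simpa [List.append_assoc] using hq
    rcases prefix_append_cases hq' with h1 | ⟨r, rfl, hr⟩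
    · exact hPpre q (h1.trans ⟨[MStep.E] ++ b ++ c, by simp⟩)
    · rcases prefix_append_cases hr with h2 | ⟨r2, rfl, hr2⟩
      · have := hbpre r h2
        rw [wsum_append]
        linarith
      · rcases prefix_append_cases hr2 with h3 | ⟨r3, rfl, hr3⟩
        · have hw := neg_length_le_wsum r2
          have hl : r2.length ≤ 1 := by simpa using h3.length_le
          have hl' : (r2.length : ℤ) ≤ 1 := by exact_mod_cast hl
          simp only [wsum_append]
          linarith
        · obtain ⟨t, rfl⟩ := hr3
          have h0 := hPpre (((a ++ [MStep.E]) ++ b) ++ r3) ⟨t, by simp⟩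
          rw [wsum_append, wsum_append, wsum_append, wsum_E] at h0
          simp only [wsum_append, wsum_E]
          linarith
  · simp only [wsum_append, wsum_E]
    linarith

lemma mu_zero {p : List MStep} (h : mu p = 0) :
    p = p.filter notE ++ List.replicate (p.count MStep.E) MStep.E := by
  induction p with
  | nil => simp
  | cons s r ih =>
    cases s
    · simp only [mu] at h
      have hc : (MStep.N :: r).count MStep.E = r.count MStep.E := by simp
      have hf : List.filter notE (MStep.N :: r) = MStep.N :: r.filter notE := by simp [notE, List.filter_cons]
      rw [hf, hc, List.cons_append, ← ih h]
    · simp only [mu] at h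
      have h1 : r.countP notE = 0 := by omega
      have hall : ∀ a ∈ r, a = MStep.E := by
        intro a ha
        have := List.countP_eq_zero.mp h1 a ha
        cases a <;> simp [notE] at this ⊢
      have hfil : List.filter notE (MStep.E :: r) = [] := by
        rw [List.filter_eq_nil_iff]
        intro a ha
        rcases List.mem_cons.mp ha with rfl | ha'
        · simp [notE]
        · rw [hall a ha']; simp [notE]
      have hcnt : (MStep.E :: r).count MStep.E = r.length + 1 := by
        rw [List.count_cons]
        simp [List.count_eq_length.mpr (fun b hb => (hall b hb).symm)]
      rw [hfil, hcnt]
      simp only [List.nil_append, List.replicate_succ]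
      congr 1
      exact List.eq_replicate_iff.mpr ⟨rfl, hall⟩
    · simp only [mu] at h
      have hc : (MStep.D :: r).count MStep.E = r.count MStep.E := by simp
      have hf : List.filter notE (MStep.D :: r) = MStep.D :: r.filter notE := by simp [notE, List.filter_cons]
      rw [hf, hc, List.cons_append, ← ih h]

lemma exists_adj {p : List MStep} (h : 0 < mu p) :
    ∃ a s t, p = a ++ MStep.E :: s :: t ∧ notE s = true := by
  induction p with
  | nil => simp [mu] at h
  | cons x r ih =>
    cases x
    · obtain ⟨a, s, t, rfl, hs⟩ := ih (by simpa [mu] using h)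
      exact ⟨MStep.N :: a, s, t, rfl, hs⟩
    · cases r with
      | nil => simp [mu] at h
      | cons y r2 =>
        cases y
        · exact ⟨[], MStep.N, r2, rfl, rfl⟩
        · have h2 : 0 < mu (MStep.E :: r2) := by
            have e1 : mu (MStep.E :: MStep.E :: r2) = r2.countP notE + (r2.countP notE + mu r2) := by
              simp [mu, List.countP_cons, notE]
            have e2 : mu (MStep.E :: r2) = r2.countP notE + mu r2 := by
              simp [mu]
            rw [e1] at h
            rw [e2]
            omega
          obtain ⟨a, s, t, heq, hs⟩ := ih h2
          exact ⟨MStep.E :: a, s, t, by rw [heq, List.cons_append], hs⟩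
        · exact ⟨[], MStep.D, r2, rfl, rfl⟩
    · obtain ⟨a, s, t, rfl, hs⟩ := ih (by simpa [mu] using h)
      exact ⟨MStep.D :: a, s, t, rfl, hs⟩

lemma exists_cover {p : List MStep} (hp : IsMotzkin p) (hmu : 0 < mu p) :
    ∃ q, MCover p q ∧ mu q < mu p := by
  classical
  obtain ⟨a, s, t, rfl, hs⟩ := exists_adj hmu
  obtain ⟨hne, hpre, hsum⟩ := hp
  set r : List MStep := s :: t with hr
  have hpr : a ++ MStep.E :: s :: t = (a ++ [MStep.E]) ++ r := by simp [hr]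
  have ha1 : 1 ≤ wsum a := by
    have h0 := hpre (a ++ [MStep.E]) ⟨r, by rw [hpr]⟩
    rw [wsum_append, wsum_E] at h0
    linarith
  have hrsum : wsum r ≤ 0 := by
    have h0 : wsum ((a ++ [MStep.E]) ++ r) = 0 := by rw [← hpr]; exact hsum
    rw [wsum_append, wsum_append, wsum_E] at h0
    linarith
  have hex : ∃ k, 1 ≤ k ∧ k ≤ r.length ∧ wsum (r.take k) ≤ 0 :=
    ⟨r.length, by simp [hr], le_rfl, by simpa using hrsum⟩
  obtain ⟨hk1, hklen, hkle⟩ := Nat.find_spec hex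
  have hmin : ∀ j, 1 ≤ j → j < Nat.find hex → 0 < wsum (r.take j) := by
    intro j hj1 hjk
    have hnot := Nat.find_min hex hjk
    push_neg at hnot
    exact hnot hj1 (le_trans hjk.le hklen)
  set k := Nat.find hex with hkdef
  obtain ⟨j, hkj⟩ : ∃ j, k = j + 1 := ⟨k - 1, by omega⟩
  have htake0 : wsum (r.take k) = 0 := by
    have hjlen : j < r.length := by omega
    have hts : r.take k = r.take j ++ [r[j]] := by
      rw [hkj, List.take_succ, List.getElem?_eq_getElem hjlen]
      rfl
    have hws : wsum (r.take k) = wsum (r.take j) + (r[j]).hdiff := by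
      rw [hts, wsum_append, wsum_cons, wsum_nil]
      ring
    rcases Nat.eq_zero_or_pos j with rfl | hj1
    · have hr0 : r[0] = s := rfl
      have h2 : (0 : ℤ) ≤ (r[0]).hdiff := by rw [hr0]; exact hdiff_notE hs
      have h3 : wsum (List.take 0 r) = 0 := by simp [wsum_nil]
      omega
    · have h1 := hmin j hj1 (by omega)
      have h2 := hdiff_ge r[j]
      omega
  set B := r.take k with hB
  set C := r.drop k with hC
  have hBC : B ++ C = r := List.take_append_drop k r
  have hBlen : B.length = k := by
    rw [hB, List.length_take]
    omega
  have hBtake : ∀ q : List MStep, q <+: B → q = r.take q.length := by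
    intro q hq
    have h1 : q = B.take q.length := List.prefix_iff_eq_take.mp hq
    have h2 : q.length ≤ k := by rw [← hBlen]; exact hq.length_le
    have h3 : B.take q.length = r.take q.length := by
      rw [hB, List.take_take, min_eq_left h2]
    rw [← h3]
    exact h1
  have hBne : B ≠ [] := by
    intro h0
    rw [h0] at hBlen
    simp at hBlen
    omega
  have hBw : ∀ q : List MStep, q <+: B → q ≠ [] → q ≠ B → 0 < wsum q := by
    intro q hq hqne hqB
    have hlen : q.length ≤ k := by rw [← hBlen]; exact hq.length_le
    have hlt : q.length < k := by
      rcases lt_or_eq_of_le hlen with h | h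
      · exact h
      · exact absurd (hq.eq_of_length (by rw [hBlen, h])) hqB
    have h1 : 1 ≤ q.length := by
      rcases Nat.eq_zero_or_pos q.length with h0 | h0
      · exact absurd (List.length_eq_zero_iff.mp h0) hqne
      · exact h0
    rw [hBtake q hq]
    exact hmin q.length h1 hlt
  have hBmot : IsMotzkin B := by
    refine ⟨hBne, ?_, htake0⟩
    intro q hq
    by_cases hq0 : q = []
    · simp [hq0, wsum_nil]
    · by_cases hqB : q = B
      · rw [hqB]; rw [hB] at htake0 ⊢; omega
      · exact (hBw q hq hq0 hqB).le
  have hBprim : IsPrimitive B := ⟨hBmot, hBw⟩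
  refine ⟨a ++ B ++ [MStep.E] ++ C, ⟨a, B, C, hBmot, hBprim, ?_, rfl⟩, ?_⟩
  · rw [hpr, ← hBC]
    simp [List.append_assoc]
  · -- mu decreases
    have hsB : s ∈ B := by
      have : B = s :: t.take j := by rw [hB, hr, hkj, List.take_succ_cons]
      rw [this]
      exact List.mem_cons_self
    have hcPB : 0 < B.countP notE := by
      rw [List.countP_pos_iff]
      exact ⟨s, hsB, hs⟩
    have hL : a ++ MStep.E :: s :: t = a ++ (MStep.E :: (B ++ C)) := by
      rw [hBC, hr]
    have hR : a ++ B ++ [MStep.E] ++ C = a ++ (B ++ (MStep.E :: C)) := by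
      simp [List.append_assoc]
    have hmuE : ∀ x : List MStep, mu (MStep.E :: x) = x.countP notE + mu x := fun _ => rfl
    have hcPE : ∀ x : List MStep, (MStep.E :: x).countP notE = x.countP notE := by
      intro x
      simp [List.countP_cons, notE]
    rw [hL, hR]
    simp only [mu_append, hmuE, hcPE, List.countP_append]
    linarith [hcPB]

/-- The canonical staircase word: from height `h`, take `m` up-steps, using a
diagonal step to reach height `x` exactly when `x ∈ S`. -/
def stair : ℕ → ℤ → Finset ℤ → List MStep
  | 0, _, _ => []
  | m + 1, h, S => (if h + 1 ∈ S then MStep.D else MStep.N) :: stair m (h + 1) S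

lemma stair_length (m : ℕ) (h : ℤ) (S : Finset ℤ) : (stair m h S).length = m := by
  induction m generalizing h with
  | zero => rfl
  | succ m ih => simp [stair, ih]

lemma stair_notE (m : ℕ) (h : ℤ) (S : Finset ℤ) : MStep.E ∉ stair m h S := by
  induction m generalizing h with
  | zero => simp [stair]
  | succ m ih =>
    simp only [stair, List.mem_cons]
    rintro (h0 | h0)
    · split at h0 <;> simp_all
    · exact ih (h + 1) h0

lemma stair_congr (m : ℕ) (h : ℤ) (S S' : Finset ℤ)
    (hss : ∀ x, h < x → x ≤ h + m → (x ∈ S ↔ x ∈ S')) :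
    stair m h S = stair m h S' := by
  induction m generalizing h with
  | zero => rfl
  | succ m ih =>
    simp only [stair]
    congr 1
    · exact if_congr (hss (h + 1) (by omega) (by push_cast; omega)) rfl rfl
    · exact ih (h + 1) fun x hx1 hx2 => hss x (by omega) (by push_cast at hx2 ⊢; omega)

lemma stair_cls (m : ℕ) (h : ℤ) (S : Finset ℤ) :
    (clsFrom (stair m h S) h).toFinset = S ∩ Finset.Icc (h + 1) (h + m) := by
  induction m generalizing h with
  | zero =>
    ext x
    simp [stair, clsFrom, Finset.mem_Icc]
  | succ m ih =>
    simp only [stair]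
    by_cases hmem : h + 1 ∈ S
    · rw [if_pos hmem]
      show ((h + 1) :: clsFrom (stair m (h + 1) S) (h + 1)).toFinset = _
      rw [List.toFinset_cons, ih (h + 1)]
      ext x
      simp only [Finset.mem_insert, Finset.mem_inter, Finset.mem_Icc]
      push_cast
      constructor
      · rintro (rfl | ⟨h1, h2, h3⟩)
        · exact ⟨hmem, by omega, by omega⟩
        · exact ⟨h1, by omega, by omega⟩
      · rintro ⟨h1, h2, h3⟩
        rcases eq_or_lt_of_le h2 with h4 | h4
        · exact Or.inl h4.symm
        · exact Or.inr ⟨h1, by omega, by omega⟩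
    · rw [if_neg hmem]
      show (clsFrom (stair m (h + 1) S) (h + 1)).toFinset = _
      rw [ih (h + 1)]
      ext x
      simp only [Finset.mem_inter, Finset.mem_Icc]
      push_cast
      constructor
      · rintro ⟨h1, h2, h3⟩
        exact ⟨h1, by omega, by omega⟩
      · rintro ⟨h1, h2, h3⟩
        have hne : x ≠ h + 1 := fun e => hmem (e ▸ h1)
        exact ⟨h1, by omega, by omega⟩

lemma eq_stair_of_E_free (w : List MStep) (hw : MStep.E ∉ w) (h : ℤ) :
    w = stair w.length h (clsFrom w h).toFinset := by
  induction w generalizing h with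
  | nil => rfl
  | cons s r ih =>
    have hwr : MStep.E ∉ r := fun hm => hw (List.mem_cons_of_mem _ hm)
    cases s
    · have hnot : (h + 1) ∉ (clsFrom (MStep.N :: r) h).toFinset := by
        simp only [List.mem_toFinset]
        intro hx
        have := (clsFrom_mem r (h + 1) (h + 1) hx).1
        omega
      simp only [List.length_cons, stair, if_neg hnot]
      congr 1
      show r = stair r.length (h + 1) (clsFrom r (h + 1)).toFinset
      exact ih hwr (h + 1)
    · exact absurd List.mem_cons_self hw
    · have hmem : (h + 1) ∈ (clsFrom (MStep.D :: r) h).toFinset := by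
        simp [clsFrom]
      simp only [List.length_cons, stair, if_pos hmem]
      congr 1
      conv_lhs => rw [ih hwr (h + 1)]
      apply stair_congr
      intro x hx1 hx2
      show x ∈ (clsFrom r (h + 1)).toFinset ↔ x ∈ ((h + 1) :: clsFrom r (h + 1)).toFinset
      simp only [List.toFinset_cons, Finset.mem_insert]
      constructor
      · exact Or.inr
      · rintro (rfl | hx)
        · omega
        · exact hx

lemma clsFrom_replicate_E (k : ℕ) (h : ℤ) :
    clsFrom (List.replicate k MStep.E) h = [] := by
  induction k generalizing h with
  | zero => rfl
  | succ k ih => simpa [List.replicate_succ, clsFrom] using ih h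

lemma wsum_replicate_E (k : ℕ) : wsum (List.replicate k MStep.E) = -(k : ℤ) := by
  induction k with
  | zero => simp [wsum]
  | succ k ih =>
    rw [List.replicate_succ, wsum_cons, ih]
    simp [MStep.hdiff]

/-- The canonical (maximal) Schröder path with diagonal heights `S`. -/
def canonW (n : ℕ) (S : Finset ℤ) : List MStep :=
  stair n 0 S ++ List.replicate (n - S.card) MStep.E

section canon

variable {n : ℕ} {S : Finset ℤ}

lemma canon_card_le (hS : S ⊆ Finset.Icc 1 (n : ℤ)) : S.card ≤ n := by
  have h1 := Finset.card_le_card hS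
  rwa [Int.card_Icc, show ((n : ℤ) + 1 - 1).toNat = n by omega] at h1

lemma canon_cls (hS : S ⊆ Finset.Icc 1 (n : ℤ)) : (cls (canonW n S)).toFinset = S := by
  rw [cls, canonW, clsFrom_append, clsFrom_replicate_E, List.append_nil, stair_cls]
  rw [show (0 : ℤ) + 1 = 1 by ring, zero_add]
  exact Finset.inter_eq_left.mpr hS

lemma canon_countD (hS : S ⊆ Finset.Icc 1 (n : ℤ)) : (canonW n S).count MStep.D = S.card := by
  have h1 : (clsFrom (stair n 0 S) 0).length = (stair n 0 S).count MStep.D :=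
    clsFrom_length _ _
  have h2 : (clsFrom (stair n 0 S) 0).toFinset.card = (clsFrom (stair n 0 S) 0).length :=
    List.toFinset_card_of_nodup (clsFrom_sorted _ _).nodup
  have h3 : (clsFrom (stair n 0 S) 0).toFinset = S := by
    rw [stair_cls, show (0 : ℤ) + 1 = 1 by ring, zero_add]
    exact Finset.inter_eq_left.mpr hS
  have h4 : (canonW n S).count MStep.D
      = (stair n 0 S).count MStep.D + (List.replicate (n - S.card) MStep.E).count MStep.D := by
    rw [canonW, List.count_append]
  have h5 : (List.replicate (n - S.card) MStep.E).count MStep.D = 0 := by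
    rw [List.count_eq_zero]
    intro hm
    have := List.eq_of_mem_replicate hm
    simp at this
  rw [h4, h5, ← h1, ← h2, h3]
  omega

lemma canon_countE : (stair n 0 S).count MStep.E = 0 :=
  List.count_eq_zero.mpr (stair_notE n 0 S)

lemma canon_wsum_stair (hS : S ⊆ Finset.Icc 1 (n : ℤ)) : wsum (stair n 0 S) = (n : ℤ) - S.card := by
  have hD : (stair n 0 S).count MStep.D = S.card := by
    have := canon_countD hS
    rw [canonW, List.count_append] at this
    simpa [List.count_replicate] using this
  have hlen := length_counts (stair n 0 S)
  rw [stair_length, canon_countE, hD] at hlen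
  rw [wsum_counts, canon_countE]
  push_cast
  omega

lemma canon_length (hS : S ⊆ Finset.Icc 1 (n : ℤ)) : (canonW n S).length + (canonW n S).count MStep.D = 2 * n := by
  have hcard := canon_card_le hS
  rw [canon_countD hS, canonW, List.length_append, stair_length, List.length_replicate]
  omega

lemma canon_motzkin (hS : S ⊆ Finset.Icc 1 (n : ℤ)) (hn : 1 ≤ n) : IsMotzkin (canonW n S) := by
  have hcard := canon_card_le hS
  refine ⟨?_, ?_, ?_⟩
  · have : 0 < (canonW n S).length := by
      rw [canonW, List.length_append, stair_length]
      omega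
    exact List.ne_nil_of_length_pos this
  · intro q hq
    rcases prefix_append_cases hq with h1 | ⟨r, rfl, hr⟩
    · refine wsum_nonneg_of_not_mem_E q fun hm => ?_
      exact stair_notE n 0 S (h1.sublist.subset hm)
    · have h2 : r.length ≤ n - S.card := by simpa using hr.length_le
      have h3 := neg_length_le_wsum r
      rw [wsum_append, canon_wsum_stair hS]
      have h4 : (r.length : ℤ) ≤ (n : ℤ) - S.card := by
        have : ((n - S.card : ℕ) : ℤ) = (n : ℤ) - S.card := by push_cast; omega
        omega
      linarith
  · rw [canonW, wsum_append, canon_wsum_stair hS, wsum_replicate_E]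
    have : ((n - S.card : ℕ) : ℤ) = (n : ℤ) - S.card := by push_cast; omega
    omega

end canon

section main

variable {n : ℕ}

lemma sub_counts {p : List MStep} (hM : IsMotzkin p)
    (hlen : p.length + p.count MStep.D = 2 * n) :
    p.count MStep.N = p.count MStep.E ∧ p.count MStep.N + p.count MStep.D = n := by
  have h1 := length_counts p
  have h2 := hM.2.2
  rw [wsum_counts] at h2
  have h3 : p.count MStep.N = p.count MStep.E := by omega
  exact ⟨h3, by omega⟩

lemma cls_subset {p : List MStep} (hM : IsMotzkin p)
    (hlen : p.length + p.count MStep.D = 2 * n) :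
    (cls p).toFinset ⊆ Finset.Icc 1 (n : ℤ) := by
  intro x hx
  rw [List.mem_toFinset] at hx
  have h1 := clsFrom_mem p 0 x hx
  have h2 := (sub_counts hM hlen).2
  rw [Finset.mem_Icc]
  constructor
  · omega
  · have : (p.count MStep.N : ℤ) + p.count MStep.D = n := by push_cast; omega
    omega

lemma cls_card {p : List MStep} (hM : IsMotzkin p)
    (hlen : p.length + p.count MStep.D = 2 * n) :
    (cls p).toFinset.card = p.count MStep.D := by
  show (clsFrom p 0).toFinset.card = _
  rw [List.toFinset_card_of_nodup (clsFrom_sorted p 0).nodup]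
  exact clsFrom_length p 0

lemma top_eq_canon {p : List MStep} (hM : IsMotzkin p)
    (hlen : p.length + p.count MStep.D = 2 * n) :
    p.filter notE ++ List.replicate (p.count MStep.E) MStep.E
      = canonW n (cls p).toFinset := by
  obtain ⟨hNE, hND⟩ := sub_counts hM hlen
  have hwlen : (p.filter notE).length = n := by
    rw [← List.countP_eq_length_filter, countP_notE]
    omega
  have hwE : MStep.E ∉ p.filter notE := by
    intro hm
    have := List.of_mem_filter hm
    simp [notE] at this
  have hfil : p.filter notE = stair n 0 (cls p).toFinset := by
    have h1 := eq_stair_of_E_free (p.filter notE) hwE 0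
    rw [hwlen, clsFrom_filter] at h1
    exact h1
  have hcnt : p.count MStep.E = n - (cls p).toFinset.card := by
    rw [cls_card hM hlen]
    omega
  rw [canonW, hfil, hcnt]

end main

abbrev Sub (n : ℕ) := {p : List MStep // IsMotzkin p ∧ p.length + p.count MStep.D = 2 * n}

abbrev SubR (n : ℕ) : Sub n → Sub n → Prop := fun P Q => MCover P.1 Q.1

def F (n : ℕ) (x : Sub n) : {S : Finset ℤ // S ⊆ Finset.Icc 1 (n : ℤ)} :=
  ⟨(cls x.1).toFinset, cls_subset x.2.1 x.2.2⟩

lemma F_resp (n : ℕ) (a b : Sub n) (h : SubR n a b) : F n a = F n b :=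
  Subtype.ext (by show (cls a.1).toFinset = (cls b.1).toFinset; rw [cls_cover h])

def canonEl (n : ℕ) (hn : 1 ≤ n) (S : {S : Finset ℤ // S ⊆ Finset.Icc 1 (n : ℤ)}) : Sub n :=
  ⟨canonW n S.1, canon_motzkin S.2 hn, canon_length S.2⟩

lemma reach (n : ℕ) : ∀ (m : ℕ) (x y : Sub n), mu x.1 ≤ m →
    y.1 = x.1.filter notE ++ List.replicate (x.1.count MStep.E) MStep.E →
    Quot.mk (SubR n) x = Quot.mk (SubR n) y := by
  intro m
  induction m with
  | zero =>
    intro x y hm hy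
    have hx : x = y := Subtype.ext (by rw [hy]; exact mu_zero (Nat.le_zero.mp hm))
    rw [hx]
  | succ m ih =>
    intro x y hm hy
    by_cases h0 : mu x.1 = 0
    · have hx : x = y := Subtype.ext (by rw [hy]; exact mu_zero h0)
      rw [hx]
    · obtain ⟨q, hcov, hlt⟩ := exists_cover x.2.1 (Nat.pos_of_ne_zero h0)
      have hqmot : IsMotzkin q := cover_motzkin x.2.1 hcov
      obtain ⟨hfil, hcE, hcD, hlen⟩ := cover_stats hcov
      have hqlen : q.length + q.count MStep.D = 2 * n := by
        rw [← hcD, ← hlen]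
        exact x.2.2
      have step : Quot.mk (SubR n) x = Quot.mk (SubR n) ⟨q, hqmot, hqlen⟩ := Quot.sound hcov
      rw [step]
      exact ih ⟨q, hqmot, hqlen⟩ y (by show mu q ≤ m; omega) (by show y.1 = _; rw [hy, hfil, hcE])

def mainEquiv (n : ℕ) (hn : 1 ≤ n) :
    Quot (SubR n) ≃ {S : Finset ℤ // S ⊆ Finset.Icc 1 (n : ℤ)} where
  toFun := Quot.lift (F n) (F_resp n)
  invFun S := Quot.mk (SubR n) (canonEl n hn S)
  left_inv := by
    apply Quot.ind
    intro x
    show Quot.mk (SubR n) (canonEl n hn (F n x)) = Quot.mk (SubR n) x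
    exact (reach n (mu x.1) x (canonEl n hn (F n x)) le_rfl
      (top_eq_canon x.2.1 x.2.2).symm).symm
  right_inv S := Subtype.ext (canon_cls S.2)

lemma card_target (n : ℕ) :
    Nat.card {S : Finset ℤ // S ⊆ Finset.Icc 1 (n : ℤ)} = 2 ^ n := by
  have e2 : {S : Finset ℤ // S ⊆ Finset.Icc 1 (n : ℤ)}
      ≃ {S : Finset ℤ // S ∈ (Finset.Icc 1 (n : ℤ)).powerset} :=
    Equiv.subtypeEquivRight fun S => (Finset.mem_powerset).symm
  rw [Nat.card_congr e2, Nat.card_eq_finsetCard, Finset.card_powerset, Int.card_Icc]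
  congr 1
  omega

end SchroederAux

/-- The number of connected components of the poset
`(≤_S, S_{2n})` of Schröder paths of length `2n` (where diagonal steps count as
length `2`) is `2 ^ n`. -/
theorem card_components_schroeder (n : ℕ) (hn : 1 ≤ n) :
    Nat.card
      (Quot (fun P Q :
          {p : List MStep // IsMotzkin p ∧ p.length + p.count MStep.D = 2 * n} =>
        MCover P.1 Q.1)) = 2 ^ n := by
  have h1 : Nat.card (Quot (SchroederAux.SubR n))
      = Nat.card {S : Finset ℤ // S ⊆ Finset.Icc 1 (n : ℤ)} :=
    Nat.card_congr (SchroederAux.mainEquiv n hn)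
  exact h1.trans (SchroederAux.card_target n)
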